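/- Under the hypotheses of the F-family: (1) if c ≤ 0.6, then ξ₄ − z₄ ≥ κ₀, where κ₀ = (3.2 + √1.24)/5 − 0.8 = 0.0627105746… > 0.05; (2) if c ≤ 0.5, then ξ₄ − z₄ ≥ κ₁, where κ₁ = (3 + √1.5)/5 − 0.75 = 0.0949489742…. Here z₄ = (c+1)/2 and ξ₄ is the largest root of F′. -/

import Mathlib

private lemma deriv_F_eval (a b c x : ℝ) :
    deriv (fun t : ℝ => t * (t - a) * (t - b) * (t - c) * (t - 1)) x
    = (x-a)*(x-b)*(x-c)*(x-1) + x*(x-b)*(x-c)*(x-1) + x*(x-a)*(x-c)*(x-1)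
      + x*(x-a)*(x-b)*(x-1) + x*(x-a)*(x-b)*(x-c) := by
  have h : HasDerivAt (fun t : ℝ => t * (t - a) * (t - b) * (t - c) * (t - 1))
      ((x-a)*(x-b)*(x-c)*(x-1) + x*(x-b)*(x-c)*(x-1) + x*(x-a)*(x-c)*(x-1)
      + x*(x-a)*(x-b)*(x-1) + x*(x-a)*(x-b)*(x-c)) x := by
    have h1 := ((((hasDerivAt_id x).mul ((hasDerivAt_id x).sub_const a)).mul
      ((hasDerivAt_id x).sub_const b)).mul ((hasDerivAt_id x).sub_const c)).mul
      ((hasDerivAt_id x).sub_const 1)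
    refine h1.congr_deriv ?_
    simp only [Pi.mul_apply, id_eq]
    ring
  exact h.deriv

private lemma le_xi4_of_nonpos (ξ₁ ξ₂ ξ₃ ξ₄ s : ℝ) (h12 : ξ₁ ≤ ξ₂) (h23 : ξ₂ ≤ ξ₃)
    (h34 : ξ₃ ≤ ξ₄) (h : 5 * (s - ξ₁) * (s - ξ₂) * (s - ξ₃) * (s - ξ₄) ≤ 0) : s ≤ ξ₄ := by
  by_contra hlt
  push_neg at hlt
  nlinarith [mul_pos (sub_pos.2 (lt_of_le_of_lt h12 (lt_of_le_of_lt h23 (lt_of_le_of_lt h34 hlt))))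
    (sub_pos.2 (lt_of_le_of_lt h23 (lt_of_le_of_lt h34 hlt))),
    mul_pos (sub_pos.2 (lt_of_le_of_lt h34 hlt)) (sub_pos.2 hlt)]

/-- Corner reduction: the value of `F'` at a point `s ∈ (c,1)` is bounded by its values
at the corners `(a,b) ∈ {(0,0),(0,c),(c,c)}`, which are `s^2*p0`, `s(s-c)*p1`, `(s-c)^2*p2`. -/
private lemma corner_bound (a b c s : ℝ) (ha : 0 ≤ a) (hab : a ≤ b) (hbc : b ≤ c)
    (hc0 : 0 ≤ c) (hcs : c < s) (hs1 : s < 1)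
    (hp0 : 5*s^2 - 4*(1+c)*s + 3*c ≤ 0)
    (hp1 : 5*s^2 - (4+3*c)*s + 2*c ≤ 0)
    (hp2 : 5*s^2 - (4+2*c)*s + c ≤ 0) :
    (s-a)*(s-b)*(s-c)*(s-1) + s*(s-b)*(s-c)*(s-1) + s*(s-a)*(s-c)*(s-1)
      + s*(s-a)*(s-b)*(s-1) + s*(s-a)*(s-b)*(s-c) ≤ 0 := by
  have hs0 : 0 < s := lt_of_le_of_lt hc0 hcs
  set Q : ℝ := 3*s^2 - 2*(1+c)*s + c with hQ
  set R : ℝ := s*(s-c)*(s-1) with hR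
  have hg0 : Q*s*s + R*(2*s) ≤ 0 := by
    have : Q*s*s + R*(2*s) = s^2 * (5*s^2 - 4*(1+c)*s + 3*c) := by rw [hQ, hR]; ring
    rw [this]
    exact mul_nonpos_of_nonneg_of_nonpos (sq_nonneg s) hp0
  have hg1 : Q*s*(s-c) + R*(2*s-c) ≤ 0 := by
    have : Q*s*(s-c) + R*(2*s-c) = (s*(s-c)) * (5*s^2 - (4+3*c)*s + 2*c) := by
      rw [hQ, hR]; ring
    rw [this]
    exact mul_nonpos_of_nonneg_of_nonpos
      (mul_nonneg hs0.le (sub_pos.2 hcs).le) hp1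
  have hg2 : Q*(s-c)*(s-c) + R*(2*(s-c)) ≤ 0 := by
    have : Q*(s-c)*(s-c) + R*(2*(s-c)) = (s-c)^2 * (5*s^2 - (4+2*c)*s + c) := by
      rw [hQ, hR]; ring
    rw [this]
    exact mul_nonpos_of_nonneg_of_nonpos (sq_nonneg (s-c)) hp2
  have key : (s-a)*(s-b)*(s-c)*(s-1) + s*(s-b)*(s-c)*(s-1) + s*(s-a)*(s-c)*(s-1)
      + s*(s-a)*(s-b)*(s-1) + s*(s-a)*(s-b)*(s-c)
      = Q*(s-a)*(s-b) + R*((s-a)+(s-b)) := by rw [hQ, hR]; ring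
  rw [key]
  rcases le_or_gt (Q*(s-b)+R) 0 with h | h
  · rcases le_or_gt (Q*(s-c)+R) 0 with h' | h'
    · -- goes to corner (c,c): g2
      have f1 : (Q*(s-b)+R)*(c-a) ≤ 0 :=
        mul_nonpos_of_nonpos_of_nonneg h (by linarith)
      have f2 : (Q*(s-c)+R)*(c-b) ≤ 0 :=
        mul_nonpos_of_nonpos_of_nonneg h' (by linarith)
      nlinarith [hg2, f1, f2]
    · -- corner (c,0): g1
      have f1 : (Q*(s-b)+R)*(c-a) ≤ 0 :=
        mul_nonpos_of_nonpos_of_nonneg h (by linarith)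
      have f2 : 0 ≤ (Q*(s-c)+R)*b := mul_nonneg h'.le (le_trans ha hab)
      nlinarith [hg1, f1, f2]
  · rcases le_or_gt (Q*s+R) 0 with h' | h'
    · -- corner (0,c): g1
      have f1 : 0 ≤ (Q*(s-b)+R)*a := mul_nonneg h.le ha
      have f2 : (Q*s+R)*(c-b) ≤ 0 :=
        mul_nonpos_of_nonpos_of_nonneg h' (by linarith)
      nlinarith [hg1, f1, f2]
    · -- corner (0,0): g0
      have f1 : 0 ≤ (Q*(s-b)+R)*a := mul_nonneg h.le ha
      have f2 : 0 ≤ (Q*s+R)*b := mul_nonneg h'.le (le_trans ha hab)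
      nlinarith [hg0, f1, f2]

set_option maxHeartbeats 1000000 in
/-- For `F(x) = x(x-a)(x-b)(x-c)(x-1)` with `0 ≤ a ≤ b ≤ c ≤ 1`:
(1) if `c ≤ 0.6` then `ξ₄ - z₄ ≥ κ₀ = (3.2 + √1.24)/5 - 0.8 > 0.05`;
(2) if `c ≤ 0.5` then `ξ₄ - z₄ ≥ κ₁ = (3 + √1.5)/5 - 0.75`. -/
theorem F_family_xi4_sub_z4_lower_bounds
    (a b c : ℝ) (ha : 0 ≤ a) (hab : a ≤ b) (hbc : b ≤ c) (hc1 : c ≤ 1)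
    (ξ₁ ξ₂ ξ₃ ξ₄ : ℝ) (hξ12 : ξ₁ ≤ ξ₂) (hξ23 : ξ₂ ≤ ξ₃) (hξ34 : ξ₃ ≤ ξ₄)
    (hder : ∀ x : ℝ,
      deriv (fun t : ℝ => t * (t - a) * (t - b) * (t - c) * (t - 1)) x
        = 5 * (x - ξ₁) * (x - ξ₂) * (x - ξ₃) * (x - ξ₄))
    (z₁ z₂ z₃ z₄ : ℝ)
    (hz₁ : z₁ = a / 2) (hz₂ : z₂ = (a + b) / 2)
    (hz₃ : z₃ = (b + c) / 2) (hz₄ : z₄ = (c + 1) / 2) :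
    (c ≤ 0.6 → ξ₄ - z₄ ≥ (3.2 + Real.sqrt 1.24) / 5 - 0.8) ∧
      (c ≤ 0.5 → ξ₄ - z₄ ≥ (3 + Real.sqrt 1.5) / 5 - 0.75) := by
  have hc0 : 0 ≤ c := le_trans ha (le_trans hab hbc)
  constructor
  · intro hc
    set k : ℝ := Real.sqrt 1.24 with hk
    have hk2 : k^2 = 1.24 := Real.sq_sqrt (by norm_num)
    have hk0 : 0 ≤ k := Real.sqrt_nonneg _
    have hkl : 1.11 ≤ k := by nlinarith
    have hku : k ≤ 1.12 := by nlinarith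
    set s : ℝ := (c+1)/2 + ((3.2 + k)/5 - 0.8) with hs
    have hcs : c < s := by rw [hs]; nlinarith
    have hs1 : s < 1 := by rw [hs]; nlinarith
    have hp0 : 5*s^2 - 4*(1+c)*s + 3*c ≤ 0 := by
      rw [hs]
      nlinarith [mul_nonneg (by linarith : (0:ℝ) ≤ 0.6 - c) (by linarith : (0:ℝ) ≤ k - 0.8),
        mul_nonneg (by linarith : (0:ℝ) ≤ 0.6 - c) (by linarith : (0:ℝ) ≤ 1.4 - c)]
    have hp1 : 5*s^2 - (4+3*c)*s + 2*c ≤ 0 := by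
      rw [hs]
      nlinarith [mul_nonneg (by linarith : (0:ℝ) ≤ 0.6 - c) (by linarith : (0:ℝ) ≤ k - 0.8),
        mul_nonneg (by linarith : (0:ℝ) ≤ 0.6 - c) (by linarith : (0:ℝ) ≤ 1 - c),
        mul_nonneg hc0 (by linarith : (0:ℝ) ≤ k - 0.8)]
    have hp2 : 5*s^2 - (4+2*c)*s + c ≤ 0 := by
      rw [hs]
      nlinarith [mul_nonneg (by linarith : (0:ℝ) ≤ 0.6 - c) (by linarith : (0:ℝ) ≤ k - 0.8),
        mul_nonneg (by linarith : (0:ℝ) ≤ 0.6 - c) (by linarith : (0:ℝ) ≤ 1 - c),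
        mul_nonneg hc0 (by linarith : (0:ℝ) ≤ k - 0.8)]
    have hF := corner_bound a b c s ha hab hbc hc0 hcs hs1 hp0 hp1 hp2
    have hprod : 5 * (s - ξ₁) * (s - ξ₂) * (s - ξ₃) * (s - ξ₄) ≤ 0 := by
      rw [← hder s, deriv_F_eval]
      exact hF
    have := le_xi4_of_nonpos ξ₁ ξ₂ ξ₃ ξ₄ s hξ12 hξ23 hξ34 hprod
    rw [hz₄]
    rw [hs] at this
    linarith
  · intro hc
    set k : ℝ := Real.sqrt 1.5 with hk
    have hk2 : k^2 = 1.5 := Real.sq_sqrt (by norm_num)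
    have hk0 : 0 ≤ k := Real.sqrt_nonneg _
    have hkl : 1.22 ≤ k := by nlinarith
    have hku : k ≤ 1.23 := by nlinarith
    set s : ℝ := (c+1)/2 + ((3 + k)/5 - 0.75) with hs
    have hcs : c < s := by rw [hs]; nlinarith
    have hs1 : s < 1 := by rw [hs]; nlinarith
    have hp0 : 5*s^2 - 4*(1+c)*s + 3*c ≤ 0 := by
      rw [hs]
      nlinarith [mul_nonneg (by linarith : (0:ℝ) ≤ 0.5 - c) (by linarith : (0:ℝ) ≤ k - 0.75),
        mul_nonneg (by linarith : (0:ℝ) ≤ 0.5 - c) (by linarith : (0:ℝ) ≤ 1.5 - c)]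
    have hp1 : 5*s^2 - (4+3*c)*s + 2*c ≤ 0 := by
      rw [hs]
      nlinarith [mul_nonneg (by linarith : (0:ℝ) ≤ 0.5 - c) (by linarith : (0:ℝ) ≤ k - 0.75),
        mul_nonneg (by linarith : (0:ℝ) ≤ 0.5 - c) (by linarith : (0:ℝ) ≤ 1 - c),
        mul_nonneg hc0 (by linarith : (0:ℝ) ≤ k - 0.75)]
    have hp2 : 5*s^2 - (4+2*c)*s + c ≤ 0 := by
      rw [hs]
      nlinarith [mul_nonneg (by linarith : (0:ℝ) ≤ 0.5 - c) (by linarith : (0:ℝ) ≤ k - 0.75),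
        mul_nonneg (by linarith : (0:ℝ) ≤ 0.5 - c) (by linarith : (0:ℝ) ≤ 1 - c),
        mul_nonneg hc0 (by linarith : (0:ℝ) ≤ k - 0.75)]
    have hF := corner_bound a b c s ha hab hbc hc0 hcs hs1 hp0 hp1 hp2
    have hprod : 5 * (s - ξ₁) * (s - ξ₂) * (s - ξ₃) * (s - ξ₄) ≤ 0 := by
      rw [← hder s, deriv_F_eval]
      exact hF
    have := le_xi4_of_nonpos ξ₁ ξ₂ ξ₃ ξ₄ s hξ12 hξ23 hξ34 hprod
    rw [hz₄]
    rw [hs] at this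
    linarith
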